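/- Suppose ψ assigns to every simplex t of L_R an element ψ(t) ∈ X such that ψ(t) R y for all y ∈ t. Then ψ defines a simplicial map from the barycentric subdivision L'_R to K_R: for every simplex of L'_R, i.e., every finite nonempty chain t_0 ⊆ t_1 ⊆ … ⊆ t_q of simplices of L_R, the set {ψ(t_0), …, ψ(t_q)} is a simplex of K_R. -/

import Mathlib

/-- A simplex of the Dowker complex `K_R`: a finite nonempty subset `s ⊆ X` such that some
`y ∈ Y` is related to every element of `s`. -/
def KSimp {X Y : Type*} (R : X → Y → Prop) (s : Set X) : Prop :=
  s.Finite ∧ s.Nonempty ∧ ∃ y : Y, ∀ x ∈ s, R x y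

/-- A simplex of the dual Dowker complex `L_R`: a finite nonempty subset `t ⊆ Y` such that
some `x ∈ X` is related to every element of `t`. -/
def LSimp {X Y : Type*} (R : X → Y → Prop) (t : Set Y) : Prop :=
  t.Finite ∧ t.Nonempty ∧ ∃ x : X, ∀ y ∈ t, R x y

/-- if `ψ` assigns to every simplex `t` of `L_R` an element `ψ(t) ∈ X` with
`ψ(t) R y` for all `y ∈ t`, then `ψ` defines a simplicial map from the barycentric
subdivision `L'_R` to `K_R`: for every finite nonempty chain `C` of simplices of `L_R`
(ordered by inclusion), the image `ψ '' C` is a simplex of `K_R`. -/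
theorem dowker_simplicial_map {X Y : Type*} (R : X → Y → Prop) (ψ : Set Y → X)
    (hψ : ∀ t : Set Y, LSimp R t → ∀ y ∈ t, R (ψ t) y)
    (C : Set (Set Y)) (hCfin : C.Finite) (hCne : C.Nonempty)
    (hCsimp : ∀ t ∈ C, LSimp R t) (hchain : IsChain (· ⊆ ·) C) :
    KSimp R (ψ '' C) := by
  refine ⟨hCfin.image ψ, hCne.image ψ, ?_⟩
  -- get a minimal element t₀ of the finite nonempty chain C
  obtain ⟨t₀, ht₀C, ht₀min⟩ := Set.Finite.exists_minimalFor id C hCfin hCne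
  obtain ⟨y, hy⟩ := (hCsimp t₀ ht₀C).2.1
  refine ⟨y, ?_⟩
  rintro x ⟨t, htC, rfl⟩
  have hsub : t₀ ⊆ t := by
    rcases eq_or_ne t₀ t with rfl | hne
    · exact subset_rfl
    · rcases hchain ht₀C htC hne with h | h
      · exact h
      · exact ht₀min htC h
  exact hψ t (hCsimp t htC) y (hsub hy)
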